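/- Let R > 0, 0 < ν ≤ 1, and define h_±(x) := (1/ν)·( −sin²[x/(2R)] ± cos[x/(2R)]·√(ν² − sin²[x/(2R)]) ). Then for every x with 0 < x < 2R·arcsin ν, both values h₊(x) and h₋(x) lie in the interval [−1, 1] and satisfy the inversion identity (1 + ν·h_±(x))·sin[x/(2R)] = ν·√(1 − h_±(x)²)·cos[x/(2R)]. -/

import Mathlib

open Real

/-- `h₊(x) = (1/ν)(−sin²[x/(2R)] + cos[x/(2R)] √(ν² − sin²[x/(2R)]))`. -/
noncomputable def hPlus (R ν x : ℝ) : ℝ :=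
  (1 / ν) * (-(sin (x / (2 * R))) ^ 2
    + cos (x / (2 * R)) * Real.sqrt (ν ^ 2 - (sin (x / (2 * R))) ^ 2))

/-- `h₋(x) = (1/ν)(−sin²[x/(2R)] − cos[x/(2R)] √(ν² − sin²[x/(2R)]))`. -/
noncomputable def hMinus (R ν x : ℝ) : ℝ :=
  (1 / ν) * (-(sin (x / (2 * R))) ^ 2
    - cos (x / (2 * R)) * Real.sqrt (ν ^ 2 - (sin (x / (2 * R))) ^ 2))

private lemma sq_eq_plus (ν s c q : ℝ) (hq2 : q ^ 2 = ν ^ 2 - s ^ 2)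
    (hc2 : c ^ 2 = 1 - s ^ 2) :
    1 - (1 / ν * (-s ^ 2 + c * q)) ^ 2 = (s * (c + q) / ν) ^ 2 ∨ ν = 0 := by
  rcases eq_or_ne ν 0 with h | h
  · exact Or.inr h
  · left; field_simp
    linear_combination (-1 - (c ^ 2 - 1 + s ^ 2)) * hq2 + (-(ν ^ 2)) * hc2

private lemma sq_eq_minus (ν s c q : ℝ) (hq2 : q ^ 2 = ν ^ 2 - s ^ 2)
    (hc2 : c ^ 2 = 1 - s ^ 2) :
    1 - (1 / ν * (-s ^ 2 - c * q)) ^ 2 = (s * (c - q) / ν) ^ 2 ∨ ν = 0 := by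
  rcases eq_or_ne ν 0 with h | h
  · exact Or.inr h
  · left; field_simp
    linear_combination (-1 - (c ^ 2 - 1 + s ^ 2)) * hq2 + (-(ν ^ 2)) * hc2

set_option maxHeartbeats 1000000 in
/-- For `0 < ν ≤ 1` and `0 < x < 2R arcsin ν`, both `h₊(x)` and `h₋(x)` lie in
`[−1, 1]` and satisfy the inversion identity
`(1 + ν h)·sin[x/(2R)] = ν √(1 − h²)·cos[x/(2R)]`. -/
theorem h_pm_mem_and_inversion (R ν : ℝ) (hR : 0 < R) (hν : 0 < ν) (hν1 : ν ≤ 1)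
    (x : ℝ) (hx0 : 0 < x) (hx : x < 2 * R * arcsin ν) :
    hPlus R ν x ∈ Set.Icc (-1 : ℝ) 1 ∧ hMinus R ν x ∈ Set.Icc (-1 : ℝ) 1 ∧
    (1 + ν * hPlus R ν x) * sin (x / (2 * R)) =
      ν * Real.sqrt (1 - (hPlus R ν x) ^ 2) * cos (x / (2 * R)) ∧
    (1 + ν * hMinus R ν x) * sin (x / (2 * R)) =
      ν * Real.sqrt (1 - (hMinus R ν x) ^ 2) * cos (x / (2 * R)) := by
  have ht0 : 0 < x / (2 * R) := by positivity
  have htlt : x / (2 * R) < arcsin ν := by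
    rw [div_lt_iff₀ (by positivity)]; linarith [hx]
  have harc : arcsin ν ≤ π / 2 := Real.arcsin_le_pi_div_two ν
  have htpi2 : x / (2 * R) < π / 2 := lt_of_lt_of_le htlt harc
  have hs0 : 0 < Real.sin (x / (2 * R)) :=
    Real.sin_pos_of_pos_of_lt_pi ht0 (lt_of_lt_of_le htpi2 (by linarith [Real.pi_pos]))
  have hc0 : 0 < Real.cos (x / (2 * R)) :=
    Real.cos_pos_of_mem_Ioo ⟨by linarith [Real.pi_pos], htpi2⟩
  have hsν : Real.sin (x / (2 * R)) < ν := by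
    have := Real.strictMonoOn_sin (a := x / (2 * R)) (b := arcsin ν)
      (Set.mem_Icc.mpr ⟨by linarith [Real.pi_pos], htpi2.le⟩)
      (Set.mem_Icc.mpr ⟨Real.neg_pi_div_two_le_arcsin ν, harc⟩) htlt
    rwa [Real.sin_arcsin (by linarith) hν1] at this
  generalize hsd : Real.sin (x / (2 * R)) = s at *
  generalize hcd : Real.cos (x / (2 * R)) = c at *
  have hs2 : s ^ 2 < ν ^ 2 := by nlinarith
  set q := Real.sqrt (ν ^ 2 - s ^ 2) with hqdef
  have hq0 : 0 ≤ q := Real.sqrt_nonneg _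
  have hq2 : q ^ 2 = ν ^ 2 - s ^ 2 := Real.sq_sqrt (by linarith)
  have hc2 : c ^ 2 = 1 - s ^ 2 := by
    have := Real.sin_sq_add_cos_sq (x / (2 * R)); rw [hsd, hcd] at this; nlinarith
  have hc1 : c ≤ 1 := by nlinarith
  have hqν : q ≤ ν := by nlinarith
  have hqc : q ≤ c := by nlinarith
  have hP : hPlus R ν x = 1 / ν * (-s ^ 2 + c * q) := by
    rw [hPlus, hsd, hcd, hqdef]
  have hM : hMinus R ν x = 1 / ν * (-s ^ 2 - c * q) := by
    rw [hMinus, hsd, hcd, hqdef]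
  have hνs2 : s ^ 2 ≤ ν := by nlinarith
  have hcq0 : 0 ≤ c * q := mul_nonneg hc0.le hq0
  have keyprod : (ν - s ^ 2 - c * q) * (ν - s ^ 2 + c * q) = (s * (1 - ν)) ^ 2 := by
    have h1 : c ^ 2 * q ^ 2 = (1 - s ^ 2) * (ν ^ 2 - s ^ 2) := by rw [hc2, hq2]
    linear_combination (-1 : ℝ) * h1
  have hpos : 0 < ν - s ^ 2 + c * q := by nlinarith
  have hcqle : s ^ 2 + c * q ≤ ν := by
    have h2 : 0 ≤ (ν - s ^ 2 - c * q) * (ν - s ^ 2 + c * q) := by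
      rw [keyprod]; exact sq_nonneg _
    have h3 : 0 ≤ ν - s ^ 2 - c * q := by
      by_contra h4
      push_neg at h4
      nlinarith [mul_neg_of_neg_of_pos h4 hpos]
    linarith
  refine ⟨⟨?_, ?_⟩, ⟨?_, ?_⟩, ?_, ?_⟩
  · rw [hP, one_div, inv_mul_eq_div, le_div_iff₀ hν]; nlinarith
  · rw [hP, one_div, inv_mul_eq_div, div_le_one hν]; nlinarith
  · rw [hM, one_div, inv_mul_eq_div, le_div_iff₀ hν]; nlinarith
  · rw [hM, one_div, inv_mul_eq_div, div_le_one hν]; nlinarith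
  · rcases sq_eq_plus ν s c q hq2 hc2 with h1 | h1
    · rw [hP, h1, Real.sqrt_sq (by positivity)]
      field_simp; linear_combination (-1 : ℝ) * hc2
    · exact absurd h1 hν.ne'
  · rcases sq_eq_minus ν s c q hq2 hc2 with h1 | h1
    · rw [hM, h1,
        Real.sqrt_sq (div_nonneg (mul_nonneg hs0.le (by linarith)) hν.le)]
      field_simp; linear_combination (-1 : ℝ) * hc2
    · exact absurd h1 hν.ne'
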